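/- Let G be a ternary semigroup, X a real normed space, and φ : G × G × G → [0,∞). Suppose f : G → X satisfies ‖f([xyz]) − f(x) − f(y) − f(z)‖ ≤ φ(x,y,z) for all x, y, z ∈ G. Then for every x ∈ G and every positive integer n, ‖3^{-n} f(x^{3^n}) − f(x)‖ ≤ (1/3)·∑_{k=0}^{n-1} 3^{-k} φ(x^{3^k}, x^{3^k}, x^{3^k}). -/
import Mathlib


/-- Iterated cube: `cubeIter op x n = x^{3^n}` where `x³ = op x x x`. -/
def cubeIter {G : Type*} (op : G → G → G → G) (x : G) : ℕ → G
  | 0 => x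
  | n + 1 => op (cubeIter op x n) (cubeIter op x n) (cubeIter op x n)

theorem stmt_3 {G : Type*} (op : G → G → G → G)
    (assoc : ∀ x y z u v : G,
      op (op x y z) u v = op x (op y z u) v ∧
      op x (op y z u) v = op x y (op z u v))
    {X : Type*} [NormedAddCommGroup X] [NormedSpace ℝ X]
    (φ : G → G → G → ℝ) (hφ : ∀ x y z, 0 ≤ φ x y z)
    (f : G → X)
    (hf : ∀ x y z : G, ‖f (op x y z) - f x - f y - f z‖ ≤ φ x y z) :
    ∀ (x : G) (n : ℕ), 0 < n →
      ‖((1 : ℝ) / 3) ^ n • f (cubeIter op x n) - f x‖ ≤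
        (1 / 3) * ∑ k ∈ Finset.range n,
          ((1 : ℝ) / 3) ^ k * φ (cubeIter op x k) (cubeIter op x k) (cubeIter op x k) := by
  intro x n _
  induction n with
  | zero => simp [cubeIter]
  | succ n ih =>
    set y := cubeIter op x n with hy
    have key : ‖((1 : ℝ) / 3) ^ (n + 1) • f (cubeIter op x (n + 1))
        - ((1 : ℝ) / 3) ^ n • f y‖ ≤ (1 / 3) * (((1 : ℝ) / 3) ^ n * φ y y y) := by
      have h1 : f (cubeIter op x (n + 1)) - (3 : ℝ) • f y
          = f (op y y y) - f y - f y - f y := by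
        simp [cubeIter, ← hy]
        module
      have h2 : ((1 : ℝ) / 3) ^ (n + 1) • f (cubeIter op x (n + 1))
          - ((1 : ℝ) / 3) ^ n • f y
          = ((1 : ℝ) / 3) ^ (n + 1) • (f (cubeIter op x (n + 1)) - (3 : ℝ) • f y) := by
        rw [smul_sub, smul_smul, pow_succ]
        ring_nf
      rw [h2, h1, norm_smul]
      have := hf y y y
      have hp : ‖((1 : ℝ) / 3) ^ (n + 1)‖ = (1 / 3) * ((1 : ℝ) / 3) ^ n := by
        rw [Real.norm_eq_abs, abs_of_pos (by positivity)]; ring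
      rw [hp, mul_assoc]
      gcongr
    calc ‖((1 : ℝ) / 3) ^ (n + 1) • f (cubeIter op x (n + 1)) - f x‖
        ≤ ‖((1 : ℝ) / 3) ^ (n + 1) • f (cubeIter op x (n + 1))
            - ((1 : ℝ) / 3) ^ n • f y‖ + ‖((1 : ℝ) / 3) ^ n • f y - f x‖ := by
          have := norm_sub_le_norm_sub_add_norm_sub
            (((1 : ℝ) / 3) ^ (n + 1) • f (cubeIter op x (n + 1)))
            (((1 : ℝ) / 3) ^ n • f y) (f x)
          linarith
      _ ≤ (1 / 3) * (((1 : ℝ) / 3) ^ n * φ y y y)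
            + (1 / 3) * ∑ k ∈ Finset.range n,
              ((1 : ℝ) / 3) ^ k * φ (cubeIter op x k) (cubeIter op x k) (cubeIter op x k) := by
          rcases Nat.eq_zero_or_pos n with h0 | hn
          · subst h0
            simp only [Finset.range_zero, Finset.sum_empty, mul_zero, add_zero]
            have : ((1 : ℝ) / 3) ^ 0 • f y - f x = 0 := by simp [hy, cubeIter]
            rw [this]
            simpa using key
          · exact add_le_add key (ih hn)
      _ = (1 / 3) * ∑ k ∈ Finset.range (n + 1),
            ((1 : ℝ) / 3) ^ k * φ (cubeIter op x k) (cubeIter op x k) (cubeIter op x k) := by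
          rw [Finset.sum_range_succ]; ring
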